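/- Let X be a linearly ordered set with at least two elements, and let min, max : X² → X denote the minimum and maximum operations and med : X³ → X the median. Then the clone generated by {min, med} intersected with the clone generated by {max} equals the clone of projections. -/

import Mathlib

def Operation (X : Type*) := Σ n : ℕ, ((Fin (n+1) → X) → X)

def IsClone {X : Type*} (C : Set (Operation X)) : Prop :=
  (∀ (n : ℕ) (k : Fin (n+1)), (⟨n, fun x => x k⟩ : Operation X) ∈ C) ∧
  (∀ (f : Operation X) (m : ℕ) (g : Fin (f.1+1) → ((Fin (m+1) → X) → X)),
     f ∈ C → (∀ i, (⟨m, g i⟩ : Operation X) ∈ C) →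
     (⟨m, fun x => f.2 (fun i => g i x)⟩ : Operation X) ∈ C)

def part {X : Type*} (C : Set (Operation X)) (n : ℕ) : Set ((Fin (n+1) → X) → X) :=
  {f | (⟨n, f⟩ : Operation X) ∈ C}

def cloneGen {X : Type*} (F : Set (Operation X)) : Set (Operation X) :=
  ⋂₀ {C | IsClone C ∧ F ⊆ C}

def Proj (X : Type*) : Set (Operation X) :=
  {op | ∃ (n : ℕ) (k : Fin (n+1)), op = ⟨n, fun x => x k⟩}

def minOp (X : Type*) [LinearOrder X] : Operation X :=
  ⟨1, fun x => min (x 0) (x 1)⟩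

def maxOp (X : Type*) [LinearOrder X] : Operation X :=
  ⟨1, fun x => max (x 0) (x 1)⟩

def medOp (X : Type*) [LinearOrder X] : Operation X :=
  ⟨2, fun x => max (min (x 0) (x 1)) (min (max (x 0) (x 1)) (x 2))⟩

-- auxiliary
def PresA {X : Type*} [LinearOrder X] (a : X) : Set (Operation X) :=
  {op | ∀ x y : Fin (op.1+1) → X, (∀ i, x i ≤ a ∨ y i ≤ a) → (op.2 x ≤ a ∨ op.2 y ≤ a)}

lemma isClone_presA {X : Type*} [LinearOrder X] (a : X) : IsClone (PresA a) := by
  constructor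
  · intro n k x y h; exact h k
  · intro f m g hf hg x y h
    exact hf _ _ (fun i => hg i x y h)

lemma min_mem_presA {X : Type*} [LinearOrder X] (a : X) : minOp X ∈ PresA a := by
  intro x y h
  by_contra hc
  push_neg at hc
  obtain ⟨h1, h2⟩ := hc
  simp only [minOp, not_le, lt_min_iff] at h1 h2
  simp only [← not_lt] at h
  have := h 0; have := h 1
  tauto

lemma med_mem_presA {X : Type*} [LinearOrder X] (a : X) : medOp X ∈ PresA a := by
  intro x y h
  by_contra hc
  push_neg at hc
  obtain ⟨h1, h2⟩ := hc
  simp only [medOp, not_le, lt_max_iff, lt_min_iff] at h1 h2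
  simp only [← not_lt] at h
  have := h 0; have := h 1; have := h 2
  tauto

def MaxSet (X : Type*) [LinearOrder X] : Set (Operation X) :=
  {op | ∃ S : Finset (Fin (op.1+1)), ∃ h : S.Nonempty, ∀ x, op.2 x = S.sup' h x}

lemma isClone_maxSet (X : Type*) [LinearOrder X] : IsClone (MaxSet X) := by
  constructor
  · intro n k
    exact ⟨{k}, Finset.singleton_nonempty k, fun x => (Finset.sup'_singleton x).symm⟩
  · intro f m g hf hg
    obtain ⟨S, hS, hfS⟩ := hf
    choose T hT hgT using hg
    refine ⟨S.biUnion T, hS.biUnion (fun i _ => hT i), fun x => ?_⟩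
    rw [hfS]
    rw [Finset.sup'_biUnion]
    exact Finset.sup'_congr _ rfl (fun i _ => hgT i x)
    exact hT

lemma max_mem_maxSet (X : Type*) [LinearOrder X] : maxOp X ∈ MaxSet X := by
  refine ⟨{0, 1}, by simp, fun x => ?_⟩
  rw [Finset.sup'_insert (H := Finset.singleton_nonempty _), Finset.sup'_singleton]; rfl

lemma cloneGen_subset {X : Type*} {F C : Set (Operation X)} (h : IsClone C) (hF : F ⊆ C) :
    cloneGen F ⊆ C := fun _ hop => hop C ⟨h, hF⟩

lemma proj_subset_cloneGen {X : Type*} (F : Set (Operation X)) : Proj X ⊆ cloneGen F := by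
  rintro op ⟨n, k, rfl⟩ C ⟨hC, _⟩
  exact hC.1 n k

theorem stmt_18 {X : Type*} [LinearOrder X] [Nontrivial X] :
    cloneGen {minOp X, medOp X} ∩ cloneGen {maxOp X} = Proj X := by
  obtain ⟨a, b, hab⟩ : ∃ a b : X, a < b := by
    obtain ⟨a, b, h⟩ := exists_pair_ne X
    rcases h.lt_or_gt with h | h
    · exact ⟨a, b, h⟩
    · exact ⟨b, a, h⟩
  apply subset_antisymm
  · rintro ⟨n, f⟩ ⟨h1, h2⟩
    have hp : (⟨n, f⟩ : Operation X) ∈ PresA a :=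
      cloneGen_subset (isClone_presA a) (by
        rintro op (rfl | rfl)
        · exact min_mem_presA a
        · exact med_mem_presA a) h1
    obtain ⟨S, hS, hfS⟩ :=
      cloneGen_subset (isClone_maxSet X) (by rintro op rfl; exact max_mem_maxSet X) h2
    rcases eq_or_lt_of_le (show 1 ≤ S.card from hS.card_pos) with hcard | hcard
    · obtain ⟨k, hk⟩ := Finset.card_eq_one.mp hcard.symm
      refine ⟨n, k, ?_⟩
      congr 1
      funext x
      exact (hfS x).trans (by simp [hk])
    · exfalso
      obtain ⟨i, hi, j, hj, hij⟩ := Finset.one_lt_card.mp hcard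
      set x : Fin (n+1) → X := fun k => if k = i then b else a with hx
      set y : Fin (n+1) → X := fun k => if k = j then b else a with hy
      have hcol : ∀ k, x k ≤ a ∨ y k ≤ a := by
        intro k
        by_cases hk : k = i
        · right; simp [hy, hk, hij]
        · left; simp [hx, hk]
      have hfx : b ≤ f x := by
        have := Finset.le_sup' x hi
        rw [← hfS] at this
        simpa [hx] using this
      have hfy : b ≤ f y := by
        have := Finset.le_sup' y hj
        rw [← hfS] at this
        simpa [hy] using this
      rcases hp x y hcol with h | h
      · exact absurd (le_trans hfx h) (not_le.mpr hab)
      · exact absurd (le_trans hfy h) (not_le.mpr hab)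
  · intro op hop
    exact ⟨proj_subset_cloneGen _ hop, proj_subset_cloneGen _ hop⟩
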